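/- arXiv:0907.3954 — 6 statements merged into one kernel-verified Lean document; each statement's English description precedes it below -/
import Mathlib

section
/- Let N ≥ 1 be an integer, 1 ≤ p < ∞, and define ψ₀(x) = max(min(2−2|x|,1),0). For c ∈ ℓ^p(ℤ) let Ψ_n^N c be the sequence (ψ₀((j−n)/N)·c(j))_{j∈ℤ}. Then ‖c‖_p ≤ ( Σ_{n ∈ Nℤ} ‖Ψ_n^N c‖_p^p )^{1/p} ≤ 2^{1/p} ‖c‖_p. -/
open MeasureTheory ENNReal Filter

noncomputable def lpNorm (p : ℝ≥0∞) (c : ℤ → ℂ) : ℝ≥0∞ :=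
  eLpNorm c p Measure.count

noncomputable def rowSup (a : ℤ → ℤ → ℂ) (k : ℤ) : ℝ≥0∞ :=
  ⨆ j : ℤ, (‖a j (j - k)‖₊ : ℝ≥0∞)

noncomputable def normC (a : ℤ → ℤ → ℂ) : ℝ≥0∞ := ∑' k : ℤ, rowSup a k

noncomputable def matMul (a : ℤ → ℤ → ℂ) (c : ℤ → ℂ) : ℤ → ℂ :=
  fun j => ∑' j' : ℤ, a j j' * c j'

noncomputable def trunc (a : ℤ → ℤ → ℂ) (s : ℕ) : ℤ → ℤ → ℂ :=
  fun i j => if |i - j| < (s : ℤ) then a i j else 0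

noncomputable def chiProj (y : ℤ) (N : ℕ) (c : ℤ → ℂ) : ℤ → ℂ :=
  fun j => if |j - y| < (N : ℤ) then c j else 0

noncomputable def psi0 (x : ℝ) : ℝ := max (min (2 - 2 * |x|) 1) 0

noncomputable def Psi (n : ℤ) (N : ℕ) (c : ℤ → ℂ) : ℤ → ℂ :=
  fun j => (psi0 (((j - n : ℤ) : ℝ) / (N : ℝ)) : ℂ) * c j

lemma psi_key (N : ℕ) (hN : 1 ≤ N) (q : ℝ) (hq : 0 < q) (j : ℤ) :
    1 ≤ (∑' m : ℤ, (‖(psi0 (((j - (N:ℤ)*m : ℤ) : ℝ) / (N:ℝ)) : ℂ)‖₊ : ℝ≥0∞) ^ q) ∧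
    (∑' m : ℤ, (‖(psi0 (((j - (N:ℤ)*m : ℤ) : ℝ) / (N:ℝ)) : ℂ)‖₊ : ℝ≥0∞) ^ q) ≤ 2 := by
  have hNR : (0:ℝ) < (N:ℝ) := by exact_mod_cast Nat.pos_of_ne_zero (by omega)
  have hNZ : (0:ℤ) < (N:ℤ) := by exact_mod_cast Nat.pos_of_ne_zero (by omega)
  set m₀ : ℤ := j / (N:ℤ) with hm₀
  set r : ℤ := j % (N:ℤ) with hr
  have hjr : j = (N:ℤ) * m₀ + r := (Int.mul_ediv_add_emod j (N:ℤ)).symm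
  have hr0 : 0 ≤ r := Int.emod_nonneg j hNZ.ne'
  have hrN : r < (N:ℤ) := Int.emod_lt_of_pos j hNZ
  constructor
  · -- lower bound: find m with psi0 = 1
    obtain ⟨m, hm⟩ : ∃ m : ℤ, |((j - (N:ℤ)*m : ℤ) : ℝ) / (N:ℝ)| ≤ 1/2 := by
      rcases le_or_gt (2*r) (N:ℤ) with h | h
      · refine ⟨m₀, ?_⟩
        have h0 : j - (N:ℤ)*m₀ = r := by omega
        rw [h0, abs_div, abs_of_nonneg (by exact_mod_cast hr0), abs_of_nonneg hNR.le,
          div_le_iff₀ hNR]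
        have : (2*r : ℝ) ≤ (N:ℝ) := by exact_mod_cast h
        linarith
      · refine ⟨m₀ + 1, ?_⟩
        have h1 : j - (N:ℤ)*(m₀+1) = r - N := by ring_nf; omega
        rw [h1, abs_div, abs_of_nonneg hNR.le, div_le_iff₀ hNR]
        have h2 : |((r - (N:ℤ) : ℤ) : ℝ)| = (((N:ℤ) - r : ℤ) : ℝ) := by
          rw [abs_of_nonpos (by exact_mod_cast (by omega : (r - (N:ℤ) : ℤ) ≤ 0))]
          push_cast; ring
        rw [h2]
        have h3 : (2*((N:ℤ) - r) : ℤ) ≤ (N:ℤ) := by omega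
        have h4 : ((2*((N:ℤ) - r) : ℤ) : ℝ) ≤ ((N:ℤ) : ℝ) := by exact_mod_cast h3
        push_cast at h4 ⊢
        linarith
    have hone : (‖(psi0 (((j - (N:ℤ)*m : ℤ) : ℝ) / (N:ℝ)) : ℂ)‖₊ : ℝ≥0∞) ^ q = 1 := by
      have h1 : psi0 (((j - (N:ℤ)*m : ℤ) : ℝ) / (N:ℝ)) = 1 := by
        have h2 : (1:ℝ) ≤ 2 - 2*|((j - (N:ℤ)*m : ℤ) : ℝ) / (N:ℝ)| := by linarith
        simp only [psi0]
        rw [min_eq_right h2, max_eq_left zero_le_one]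
      rw [h1]; simp
    calc (1:ℝ≥0∞) = (‖(psi0 (((j - (N:ℤ)*m : ℤ) : ℝ) / (N:ℝ)) : ℂ)‖₊ : ℝ≥0∞) ^ q :=
          hone.symm
      _ ≤ _ := ENNReal.le_tsum m
  · -- upper bound
    have hsupp : ∀ m ∉ ({m₀, m₀ + 1} : Finset ℤ),
        (‖(psi0 (((j - (N:ℤ)*m : ℤ) : ℝ) / (N:ℝ)) : ℂ)‖₊ : ℝ≥0∞) ^ q = 0 := by
      intro m hm
      simp only [Finset.mem_insert, Finset.mem_singleton] at hm
      push_neg at hm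
      have hz : psi0 (((j - (N:ℤ)*m : ℤ) : ℝ) / (N:ℝ)) = 0 := by
        by_contra hne
        have habs : |((j - (N:ℤ)*m : ℤ) : ℝ) / (N:ℝ)| < 1 := by
          by_contra h1
          push_neg at h1
          have h2 : min (2 - 2*|((j - (N:ℤ)*m : ℤ) : ℝ) / (N:ℝ)|) 1 ≤ 0 :=
            le_trans (min_le_left _ _) (by linarith)
          exact hne (by simp only [psi0]; rw [max_eq_right h2])
        rw [abs_div, abs_of_nonneg hNR.le, div_lt_one hNR] at habs
        have h3 : |(j - (N:ℤ)*m : ℤ)| < (N:ℤ) := by exact_mod_cast habs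
        rw [abs_lt] at h3
        have hd : m = m₀ ∨ m = m₀ + 1 := by
          rcases h3 with ⟨h1, h2⟩
          have hd1 : 0 ≤ m - m₀ := by nlinarith [hjr]
          have hd2 : m - m₀ ≤ 1 := by nlinarith [hjr]
          omega
        tauto
      rw [hz]
      simp [ENNReal.zero_rpow_of_pos hq]
    rw [tsum_eq_sum hsupp]
    have hle : ∀ m : ℤ, (‖(psi0 (((j - (N:ℤ)*m : ℤ) : ℝ) / (N:ℝ)) : ℂ)‖₊ : ℝ≥0∞) ^ q ≤ 1 := by
      intro m
      refine ENNReal.rpow_le_one ?_ hq.le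
      have h : ‖(psi0 (((j - (N:ℤ)*m : ℤ) : ℝ) / (N:ℝ)) : ℂ)‖ ≤ 1 := by
        rw [Complex.norm_real, Real.norm_eq_abs, abs_of_nonneg (le_max_right _ _)]
        exact max_le (min_le_right _ _) zero_le_one
      exact ENNReal.coe_le_one_iff.2 (by exact_mod_cast h)
    calc ∑ m ∈ ({m₀, m₀ + 1} : Finset ℤ),
          (‖(psi0 (((j - (N:ℤ)*m : ℤ) : ℝ) / (N:ℝ)) : ℂ)‖₊ : ℝ≥0∞) ^ q
        ≤ ∑ _m ∈ ({m₀, m₀ + 1} : Finset ℤ), 1 := Finset.sum_le_sum fun m _ => hle m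
      _ = (({m₀, m₀ + 1} : Finset ℤ).card : ℝ≥0∞) := by simp
      _ ≤ 2 := by
          have : ({m₀, m₀ + 1} : Finset ℤ).card ≤ 2 :=
            le_trans (Finset.card_insert_le _ _) (by simp)
          exact_mod_cast this

theorem stmt6 (p : ℝ≥0∞) (hp : 1 ≤ p) (hp' : p ≠ ⊤) (N : ℕ) (hN : 1 ≤ N)
    (c : ℤ → ℂ) (hc : lpNorm p c < ⊤) :
    lpNorm p c ≤ (∑' m : ℤ, (lpNorm p (Psi ((N : ℤ) * m) N c)) ^ p.toReal) ^ (1 / p.toReal) ∧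
    (∑' m : ℤ, (lpNorm p (Psi ((N : ℤ) * m) N c)) ^ p.toReal) ^ (1 / p.toReal) ≤
      (2 : ℝ≥0∞) ^ (1 / p.toReal) * lpNorm p c := by
  have hp0 : p ≠ 0 := (zero_lt_one.trans_le hp).ne'
  set q := p.toReal with hqdef
  have hq : 0 < q := ENNReal.toReal_pos hp0 hp'
  have hA : ∀ d : ℤ → ℂ, lpNorm p d = (∑' j : ℤ, (‖d j‖₊ : ℝ≥0∞) ^ q) ^ (1/q) := by
    intro d
    rw [_root_.lpNorm, eLpNorm_eq_lintegral_rpow_enorm_toReal hp0 hp', lintegral_count]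
    rfl
  have hS : ∑' m : ℤ, (lpNorm p (Psi ((N:ℤ) * m) N c)) ^ q
      = ∑' j : ℤ, (∑' m : ℤ, (‖(psi0 (((j - (N:ℤ)*m : ℤ) : ℝ) / (N:ℝ)) : ℂ)‖₊ : ℝ≥0∞) ^ q)
          * (‖c j‖₊ : ℝ≥0∞) ^ q := by
    calc ∑' m : ℤ, (lpNorm p (Psi ((N:ℤ) * m) N c)) ^ q
        = ∑' m : ℤ, ∑' j : ℤ, (‖Psi ((N:ℤ) * m) N c j‖₊ : ℝ≥0∞) ^ q := by
          refine tsum_congr fun m => ?_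
          rw [hA, ← ENNReal.rpow_mul, one_div_mul_cancel hq.ne', ENNReal.rpow_one]
      _ = ∑' m : ℤ, ∑' j : ℤ,
            (‖(psi0 (((j - (N:ℤ)*m : ℤ) : ℝ) / (N:ℝ)) : ℂ)‖₊ : ℝ≥0∞) ^ q
              * (‖c j‖₊ : ℝ≥0∞) ^ q := by
          refine tsum_congr fun m => tsum_congr fun j => ?_
          rw [Psi]
          rw [nnnorm_mul, ENNReal.coe_mul, ENNReal.mul_rpow_of_nonneg _ _ hq.le]
      _ = ∑' j : ℤ, ∑' m : ℤ,
            (‖(psi0 (((j - (N:ℤ)*m : ℤ) : ℝ) / (N:ℝ)) : ℂ)‖₊ : ℝ≥0∞) ^ q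
              * (‖c j‖₊ : ℝ≥0∞) ^ q := ENNReal.tsum_comm
      _ = _ := tsum_congr fun j => ENNReal.tsum_mul_right
  have hlow : ∑' j : ℤ, (‖c j‖₊ : ℝ≥0∞) ^ q
      ≤ ∑' m : ℤ, (lpNorm p (Psi ((N:ℤ) * m) N c)) ^ q := by
    rw [hS]
    refine ENNReal.tsum_le_tsum fun j => ?_
    conv_lhs => rw [← one_mul ((‖c j‖₊ : ℝ≥0∞) ^ q)]
    exact mul_le_mul_left (psi_key N hN q hq j).1 _
  have hupp : ∑' m : ℤ, (lpNorm p (Psi ((N:ℤ) * m) N c)) ^ q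
      ≤ 2 * ∑' j : ℤ, (‖c j‖₊ : ℝ≥0∞) ^ q := by
    rw [hS]
    calc ∑' j : ℤ, (∑' m : ℤ, (‖(psi0 (((j - (N:ℤ)*m : ℤ) : ℝ) / (N:ℝ)) : ℂ)‖₊ : ℝ≥0∞) ^ q)
            * (‖c j‖₊ : ℝ≥0∞) ^ q
        ≤ ∑' j : ℤ, 2 * (‖c j‖₊ : ℝ≥0∞) ^ q :=
          ENNReal.tsum_le_tsum fun j => mul_le_mul_left (psi_key N hN q hq j).2 _
      _ = 2 * ∑' j : ℤ, (‖c j‖₊ : ℝ≥0∞) ^ q := ENNReal.tsum_mul_left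
  constructor
  · rw [hA c]
    exact ENNReal.rpow_le_rpow hlow (by positivity)
  · calc (∑' m : ℤ, (lpNorm p (Psi ((N:ℤ) * m) N c)) ^ q) ^ (1/q)
        ≤ (2 * ∑' j : ℤ, (‖c j‖₊ : ℝ≥0∞) ^ q) ^ (1/q) :=
          ENNReal.rpow_le_rpow hupp (by positivity)
      _ = (2:ℝ≥0∞) ^ (1/q) * (∑' j : ℤ, (‖c j‖₊ : ℝ≥0∞) ^ q) ^ (1/q) :=
          ENNReal.mul_rpow_of_nonneg _ _ (by positivity)
      _ = (2:ℝ≥0∞) ^ (1/q) * lpNorm p c := by rw [hA c]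
end

section
/- Let N ≥ 1 be an integer, 1 ≤ p < ∞, ψ₀(x) = max(min(2−2|x|,1),0), and Ψ_n^{4N} c = (ψ₀((j−n)/(4N))·c(j))_{j∈ℤ}. Then for all c ∈ ℓ^p(ℤ), 4^{1/p} ‖c‖_p ≤ ( Σ_{n ∈ Nℤ} ‖Ψ_n^{4N} c‖_p^p )^{1/p} ≤ (5 + 2^{1−p})^{1/p} ‖c‖_p. -/
open MeasureTheory ENNReal Filter

open Set

lemma psi0_nonneg (x : ℝ) : 0 ≤ psi0 x := le_max_right _ _

lemma psi0_eq_zero {x : ℝ} (h : 1 ≤ |x|) : psi0 x = 0 := by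
  unfold psi0
  rw [max_eq_right]
  exact le_trans (min_le_left _ _) (by linarith)

lemma psi0_eq_one {x : ℝ} (h : |x| ≤ 1/2) : psi0 x = 1 := by
  unfold psi0
  rw [min_eq_right (by linarith), max_eq_left (by norm_num)]

lemma psi0_eq_ramp {x : ℝ} (h1 : 1/2 ≤ |x|) (h2 : |x| ≤ 1) : psi0 x = 2 - 2*|x| := by
  unfold psi0
  rw [min_eq_left (by linarith), max_eq_left (by linarith)]

lemma psi_eval {u : ℝ} (h0 : 0 ≤ u) (h1 : u ≤ 2⁻¹) :
    psi0 (u/2 + 3/4) = 2⁻¹ - u ∧ psi0 (u/2 + 1/2) = 1 - u ∧ psi0 (u/2 + 1/4) = 1 ∧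
    psi0 (u/2) = 1 ∧ psi0 (u/2 - 1/4) = 1 ∧ psi0 (u/2 - 1/2) = 1 ∧
    psi0 (u/2 - 3/4) = 2⁻¹ + u ∧ psi0 (u/2 - 1) = u := by
  have a1 : |u/2 + 3/4| = u/2 + 3/4 := abs_of_nonneg (by linarith)
  have a2 : |u/2 + 1/2| = u/2 + 1/2 := abs_of_nonneg (by linarith)
  have a7 : |u/2 - 3/4| = 3/4 - u/2 := by rw [abs_of_nonpos (by linarith)]; ring
  have a8 : |u/2 - 1| = 1 - u/2 := by rw [abs_of_nonpos (by linarith)]; ring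
  refine ⟨?_, ?_, ?_, ?_, ?_, ?_, ?_, ?_⟩
  · rw [psi0_eq_ramp (by rw [a1]; linarith) (by rw [a1]; linarith), a1]; ring
  · rw [psi0_eq_ramp (by rw [a2]; linarith) (by rw [a2]; linarith), a2]; ring
  · exact psi0_eq_one (by rw [abs_of_nonneg (by linarith)]; linarith)
  · exact psi0_eq_one (by rw [abs_of_nonneg (by linarith)]; linarith)
  · exact psi0_eq_one (abs_le.mpr ⟨by linarith, by linarith⟩)
  · exact psi0_eq_one (abs_le.mpr ⟨by linarith, by linarith⟩)
  · rw [psi0_eq_ramp (by rw [a7]; linarith) (by rw [a7]; linarith), a7]; ring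
  · rw [psi0_eq_ramp (by rw [a8]; linarith) (by rw [a8]; linarith), a8]; ring

lemma conv_aff {q : ℝ} (hq : 1 ≤ q) (a b : ℝ) (h : ∀ x ∈ Set.Icc (0:ℝ) 2⁻¹, 0 ≤ a + b * x) :
    ConvexOn ℝ (Set.Icc (0:ℝ) 2⁻¹) (fun x => (a + b*x) ^ q) := by
  refine ⟨convex_Icc _ _, ?_⟩
  intro x hx y hy s t hs ht hst
  have hx' : (a + b*x) ∈ Ici (0:ℝ) := h x hx
  have hy' : (a + b*y) ∈ Ici (0:ℝ) := h y hy
  have := (convexOn_rpow hq).2 hx' hy' hs ht hst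
  simp only [smul_eq_mul] at this ⊢
  have key : a + b*(s*x + t*y) = s*(a+b*x) + t*(a+b*y) := by
    have : a = (s+t)*a := by rw [hst]; ring
    nlinarith [this]
  rw [key]
  exact this

lemma real_key {q u : ℝ} (hq : 1 ≤ q) (hu : 0 ≤ u) (hu' : u ≤ 2⁻¹) :
    u^q + (2⁻¹+u)^q + (1-u)^q + (2⁻¹-u)^q ≤ 1 + 2^(1-q) := by
  have hconv : ConvexOn ℝ (Set.Icc (0:ℝ) 2⁻¹)
      (fun x : ℝ => (0 + 1*x)^q + ((2⁻¹ + 1*x)^q + ((1 + (-1)*x)^q + (2⁻¹ + (-1)*x)^q))) := by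
    refine (conv_aff hq 0 1 ?_).add ((conv_aff hq 2⁻¹ 1 ?_).add
      ((conv_aff hq 1 (-1) ?_).add (conv_aff hq 2⁻¹ (-1) ?_))) <;>
    · rintro x ⟨h1, h2⟩; norm_num; linarith
  have hmem : u ∈ segment ℝ (0:ℝ) 2⁻¹ := by
    rw [segment_eq_Icc (by norm_num)]; exact ⟨hu, hu'⟩
  have := hconv.le_on_segment (by constructor <;> norm_num) (by constructor <;> norm_num) hmem
  simp only [zero_add, one_mul, neg_one_mul, mul_zero, add_zero, mul_inv_cancel₀] at this
  have e0 : (0:ℝ)^q = 0 := Real.zero_rpow (by linarith)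
  have e1 : (1:ℝ)^q = 1 := Real.one_rpow q
  have e2 : (2:ℝ)^(1-q) = 2 * (2⁻¹:ℝ)^q := by
    rw [Real.rpow_sub (by norm_num), Real.rpow_one, Real.inv_rpow (by norm_num), div_eq_mul_inv]
  rw [show (1:ℝ)+-u = 1-u by ring, show (2⁻¹:ℝ)+-u = 2⁻¹-u by ring,
    show (1:ℝ)+-2⁻¹ = 2⁻¹ by norm_num, show (2⁻¹:ℝ)+-2⁻¹ = 0 by ring,
    show (2⁻¹:ℝ)+(2⁻¹:ℝ) = 1 by norm_num, e0, e1] at this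
  calc u^q + (2⁻¹+u)^q + (1-u)^q + (2⁻¹-u)^q
      = u^q + ((2⁻¹+u)^q + ((1-u)^q + (2⁻¹-u)^q)) := by ring
    _ ≤ _ := this
    _ ≤ 1 + 2^(1-q) := by rw [e2]; apply max_le <;> linarith

lemma S_bounds {q : ℝ} (hq : 1 ≤ q) {N : ℕ} (hN : 1 ≤ N) (j : ℤ) :
    4 ≤ (∑' m : ℤ, (ENNReal.ofReal (psi0 (((j - (N:ℤ)*m : ℤ):ℝ) / ((4*N : ℕ):ℝ))))^q) ∧
    (∑' m : ℤ, (ENNReal.ofReal (psi0 (((j - (N:ℤ)*m : ℤ):ℝ) / ((4*N : ℕ):ℝ))))^q)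
      ≤ 5 + (2:ℝ≥0∞)^(1-q) := by
  have hN0 : (0:ℤ) < (N:ℤ) := by exact_mod_cast hN
  have hNR : (1:ℝ) ≤ (N:ℝ) := by exact_mod_cast hN
  set g : ℤ → ℝ≥0∞ :=
    fun m => (ENNReal.ofReal (psi0 (((j - (N:ℤ)*m : ℤ):ℝ) / ((4*N : ℕ):ℝ))))^q with hg
  set m₀ : ℤ := j / (N:ℤ) with hm₀
  set r : ℤ := j % (N:ℤ) with hr
  have hj : (N:ℤ) * m₀ + r = j := Int.mul_ediv_add_emod j N
  have hr0 : 0 ≤ r := Int.emod_nonneg j hN0.ne'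
  have hrN : r < N := Int.emod_lt_of_pos j hN0
  have h4N : (0:ℝ) < ((4*N:ℕ):ℝ) := by push_cast; linarith
  have hsupp : ∀ m ∉ Finset.Icc (m₀-3) (m₀+4), g m = 0 := by
    intro m hm
    rw [Finset.mem_Icc] at hm
    have hcase : m ≤ m₀ - 4 ∨ m₀ + 5 ≤ m := by omega
    have habs : 1 ≤ |((j - (N:ℤ)*m : ℤ):ℝ) / ((4*N : ℕ):ℝ)| := by
      rcases hcase with hcase | hcase
      · have ht : (4:ℤ)*N ≤ j - (N:ℤ)*m := by
          nlinarith [mul_le_mul_of_nonneg_left (show (4:ℤ) ≤ m₀ - m by omega) hN0.le]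
        have htR : ((4*N:ℕ):ℝ) ≤ ((j - (N:ℤ)*m : ℤ):ℝ) := by exact_mod_cast ht
        rw [abs_of_nonneg (div_nonneg (le_trans h4N.le htR) h4N.le), le_div_iff₀ h4N]
        linarith
      · have ht : j - (N:ℤ)*m ≤ -(4*N) := by
          nlinarith [mul_le_mul_of_nonneg_left (show m₀ - m ≤ -5 by omega) hN0.le]
        have htR : ((j - (N:ℤ)*m : ℤ):ℝ) ≤ -((4*N:ℕ):ℝ) := by exact_mod_cast ht
        rw [le_abs]
        right
        rw [← neg_div, le_div_iff₀ h4N]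
        linarith
    rw [hg]
    simp only [psi0_eq_zero habs, ENNReal.ofReal_zero]
    exact ENNReal.zero_rpow_of_pos (by linarith)
  rw [tsum_eq_sum hsupp]
  have hIcc : Finset.Icc (m₀-3) (m₀+4) = Finset.map (addLeftEmbedding m₀) (Finset.Icc (-3) 4) := by
    rw [Finset.map_add_left_Icc]; congr 1 <;> ring
  rw [hIcc, Finset.sum_map]
  simp only [addLeftEmbedding_apply]
  rw [show Finset.Icc (-3:ℤ) 4 = {-3,-2,-1,0,1,2,3,4} from rfl]
  rw [Finset.sum_insert (by decide), Finset.sum_insert (by decide), Finset.sum_insert (by decide),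
    Finset.sum_insert (by decide), Finset.sum_insert (by decide), Finset.sum_insert (by decide),
    Finset.sum_insert (by decide), Finset.sum_singleton]
  set u : ℝ := (r:ℝ)/(2*(N:ℝ)) with hu
  have hu0 : 0 ≤ u := by positivity
  have hu2 : u ≤ 2⁻¹ := by
    rw [hu, div_le_iff₀ (by linarith)]
    have : (r:ℝ) ≤ (N:ℝ) := by exact_mod_cast hrN.le
    linarith
  have harg : ∀ k : ℤ, ((j - (N:ℤ)*(m₀+k) : ℤ):ℝ) / ((4*N : ℕ):ℝ) = u/2 - (k:ℝ)/4 := by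
    intro k
    have h1 : j - (N:ℤ)*(m₀+k) = r - (N:ℤ)*k := by rw [← hj]; ring
    rw [h1, hu]
    have hNne : (N:ℝ) ≠ 0 := by linarith
    push_cast
    field_simp
    ring
  have hgk : ∀ k : ℤ, g (m₀ + k) = (ENNReal.ofReal (psi0 (u/2 - (k:ℝ)/4)))^q := by
    intro k
    show (ENNReal.ofReal (psi0 (((j - (N:ℤ)*(m₀+k) : ℤ):ℝ) / ((4*N : ℕ):ℝ))))^q = _
    rw [harg k]
  obtain ⟨p1, p2, p3, p4, p5, p6, p7, p8⟩ := psi_eval hu0 hu2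
  rw [hgk (-3), hgk (-2), hgk (-1), hgk 0, hgk 1, hgk 2, hgk 3, hgk 4]
  norm_num
  rw [p1, p2, p3, p4, p5, p6, p7, p8]
  rw [ENNReal.ofReal_one, ENNReal.one_rpow]
  constructor
  · calc (4:ℝ≥0∞) = 0 + (0 + (1 + (1 + (1 + (1 + (0 + 0)))))) := by norm_num
      _ ≤ _ := by gcongr <;> exact zero_le
  · have hrw : ∀ a : ℝ, 0 ≤ a → (ENNReal.ofReal a)^q = ENNReal.ofReal (a^q) := by
      intro a ha; rw [ENNReal.ofReal_rpow_of_nonneg ha (by linarith)]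
    have n1 : (0:ℝ) ≤ u^q := Real.rpow_nonneg hu0 q
    have n2 : (0:ℝ) ≤ (2⁻¹+u)^q := Real.rpow_nonneg (by linarith) q
    have n3 : (0:ℝ) ≤ (1-u)^q := Real.rpow_nonneg (by linarith) q
    have n4 : (0:ℝ) ≤ (2⁻¹-u)^q := Real.rpow_nonneg (by linarith) q
    rw [hrw _ (by linarith), hrw _ (by linarith), hrw _ (by linarith), hrw _ hu0]
    have hE : ENNReal.ofReal ((2⁻¹-u)^q) + (ENNReal.ofReal ((1-u)^q) + (1 + (1 + (1 + (1 +
        (ENNReal.ofReal ((2⁻¹+u)^q) + ENNReal.ofReal (u^q)))))))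
        = 4 + ENNReal.ofReal (u^q + (2⁻¹+u)^q + (1-u)^q + (2⁻¹-u)^q) := by
      rw [ENNReal.ofReal_add (by linarith) n4, ENNReal.ofReal_add (by linarith) n3,
        ENNReal.ofReal_add n1 n2]
      ring
    rw [hE]
    have : ENNReal.ofReal (u^q + (2⁻¹+u)^q + (1-u)^q + (2⁻¹-u)^q)
        ≤ ENNReal.ofReal (1 + 2^(1-q)) :=
      ENNReal.ofReal_le_ofReal (real_key hq hu0 hu2)
    calc 4 + ENNReal.ofReal (u^q + (2⁻¹+u)^q + (1-u)^q + (2⁻¹-u)^q)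
        ≤ 4 + ENNReal.ofReal (1 + 2^(1-q)) := by gcongr
      _ = 5 + (2:ℝ≥0∞)^(1-q) := by
          rw [ENNReal.ofReal_add (by norm_num) (Real.rpow_nonneg (by norm_num) _),
            ENNReal.ofReal_one, ← ENNReal.ofReal_rpow_of_pos (by norm_num : (0:ℝ) < 2),
            ENNReal.ofReal_ofNat, ← add_assoc]
          norm_num

theorem stmt7 (p : ℝ≥0∞) (hp : 1 ≤ p) (hp' : p ≠ ⊤) (N : ℕ) (hN : 1 ≤ N)
    (c : ℤ → ℂ) (hc : lpNorm p c < ⊤) :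
    (4 : ℝ≥0∞) ^ (1 / p.toReal) * lpNorm p c ≤
      (∑' m : ℤ, (lpNorm p (Psi ((N : ℤ) * m) (4 * N) c)) ^ p.toReal) ^ (1 / p.toReal) ∧
    (∑' m : ℤ, (lpNorm p (Psi ((N : ℤ) * m) (4 * N) c)) ^ p.toReal) ^ (1 / p.toReal) ≤
      ((5 : ℝ≥0∞) + (2 : ℝ≥0∞) ^ (1 - p.toReal)) ^ (1 / p.toReal) * lpNorm p c := by
  have hp0 : p ≠ 0 := (lt_of_lt_of_le zero_lt_one hp).ne'
  have hpt1 : 1 ≤ p.toReal := by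
    rw [← ENNReal.toReal_one]; exact ENNReal.toReal_mono hp' hp
  have hpt : 0 < p.toReal := lt_of_lt_of_le zero_lt_one hpt1
  set q := p.toReal with hqdef
  have key : ∀ f : ℤ → ℂ, (lpNorm p f) ^ q = ∑' j : ℤ, (‖f j‖₊ : ℝ≥0∞) ^ q := by
    intro f
    rw [_root_.lpNorm, eLpNorm_eq_lintegral_rpow_enorm_toReal hp0 hp', ← ENNReal.rpow_mul, one_div,
      inv_mul_cancel₀ hpt.ne', ENNReal.rpow_one, lintegral_count]
    rfl
  have hterm : ∀ (n : ℤ) (j : ℤ), (‖Psi n (4*N) c j‖₊ : ℝ≥0∞) ^ q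
      = (ENNReal.ofReal (psi0 (((j - n : ℤ):ℝ)/((4*N:ℕ):ℝ)))) ^ q * (‖c j‖₊ : ℝ≥0∞) ^ q := by
    intro n j
    show ((‖(psi0 (((j - n : ℤ) : ℝ) / ((4*N:ℕ) : ℝ)) : ℂ) * c j‖₊ : ℝ≥0∞)) ^ q = _
    rw [nnnorm_mul, ENNReal.coe_mul, ENNReal.mul_rpow_of_nonneg _ _ hpt.le]
    congr 2
    rw [Complex.nnnorm_real, ← enorm_eq_nnnorm, Real.enorm_eq_ofReal (psi0_nonneg _)]
  have hsum : ∑' m : ℤ, (lpNorm p (Psi ((N : ℤ) * m) (4 * N) c)) ^ q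
      = ∑' j : ℤ, (∑' m : ℤ, (ENNReal.ofReal
          (psi0 (((j - (N:ℤ)*m : ℤ):ℝ)/((4*N:ℕ):ℝ)))) ^ q) * (‖c j‖₊ : ℝ≥0∞) ^ q := by
    calc ∑' m : ℤ, (lpNorm p (Psi ((N : ℤ) * m) (4 * N) c)) ^ q
        = ∑' m : ℤ, ∑' j : ℤ, (ENNReal.ofReal
            (psi0 (((j - (N:ℤ)*m : ℤ):ℝ)/((4*N:ℕ):ℝ)))) ^ q * (‖c j‖₊ : ℝ≥0∞) ^ q := by
          refine tsum_congr fun m => ?_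
          rw [key]
          exact tsum_congr fun j => hterm _ j
      _ = ∑' j : ℤ, ∑' m : ℤ, (ENNReal.ofReal
            (psi0 (((j - (N:ℤ)*m : ℤ):ℝ)/((4*N:ℕ):ℝ)))) ^ q * (‖c j‖₊ : ℝ≥0∞) ^ q :=
          ENNReal.tsum_comm
      _ = _ := tsum_congr fun j => ENNReal.tsum_mul_right
  have hlow : (4 : ℝ≥0∞) * (lpNorm p c) ^ q
      ≤ ∑' m : ℤ, (lpNorm p (Psi ((N : ℤ) * m) (4 * N) c)) ^ q := by
    rw [hsum, key, ← ENNReal.tsum_mul_left]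
    exact Summable.tsum_le_tsum (fun j => mul_le_mul_left (S_bounds hpt1 hN j).1 _)
      ENNReal.summable ENNReal.summable
  have hhigh : (∑' m : ℤ, (lpNorm p (Psi ((N : ℤ) * m) (4 * N) c)) ^ q)
      ≤ ((5:ℝ≥0∞) + (2:ℝ≥0∞)^(1-q)) * (lpNorm p c) ^ q := by
    rw [hsum, key, ← ENNReal.tsum_mul_left]
    exact Summable.tsum_le_tsum (fun j => mul_le_mul_left (S_bounds hpt1 hN j).2 _)
      ENNReal.summable ENNReal.summable
  have hcancel : ∀ x : ℝ≥0∞, (x ^ q) ^ (1/q) = x := by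
    intro x
    rw [← ENNReal.rpow_mul, mul_one_div, div_self hpt.ne', ENNReal.rpow_one]
  constructor
  · have := ENNReal.rpow_le_rpow hlow (by positivity : (0:ℝ) ≤ 1/q)
    rwa [ENNReal.mul_rpow_of_nonneg _ _ (by positivity : (0:ℝ) ≤ 1/q), hcancel] at this
  · have := ENNReal.rpow_le_rpow hhigh (by positivity : (0:ℝ) ≤ 1/q)
    rwa [ENNReal.mul_rpow_of_nonneg _ _ (by positivity : (0:ℝ) ≤ 1/q), hcancel] at this
end

section
/- Let N ≥ 1, A ∈ C with truncation A_N, and Ψ_n^N the multiplication operator by ψ₀((·−n)/N) where ψ₀(x)=max(min(2−2|x|,1),0) and n ∈ Nℤ. Then the commutator satisfies ‖Ψ_n^N A_N − A_N Ψ_n^N‖_C ≤ inf_{0 ≤ s ≤ N} ( ‖A_N − A_s‖_C + (2s/N)‖A_s‖_C ). -/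
open MeasureTheory ENNReal Filter

lemma psi0_lip (x y : ℝ) : |psi0 x - psi0 y| ≤ 2 * |x - y| := by
  unfold psi0
  have h1 : |max (min (2 - 2*|x|) 1) 0 - max (min (2 - 2*|y|) 1) 0| ≤
      |min (2 - 2*|x|) 1 - min (2 - 2*|y|) 1| := abs_max_sub_max_le_abs _ _ _
  have h2 := abs_min_sub_min_le_max (2 - 2*|x|) 1 (2 - 2*|y|) 1
  simp only [sub_self, abs_zero] at h2
  have e : (2 - 2*|x|) - (2 - 2*|y|) = 2 * (|y| - |x|) := by ring
  rw [e, abs_mul, abs_two] at h2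
  have h2' : 2 * |(|y| - |x|)| ⊔ 0 = 2 * |(|y| - |x|)| := max_eq_left (by positivity)
  rw [h2'] at h2
  have h3 : |(|y| - |x|)| ≤ |x - y| := by
    have := abs_abs_sub_abs_le_abs_sub y x
    rwa [abs_sub_comm y x] at this
  linarith

lemma psi0_mem (x : ℝ) : psi0 x ∈ Set.Icc (0:ℝ) 1 :=
  ⟨le_max_right _ _, max_le (min_le_right _ _) zero_le_one⟩

lemma normC_mul_le (f g : ℤ → ℤ → ℂ) (c : ℝ≥0∞)
    (h : ∀ i j, (‖f i j‖₊ : ℝ≥0∞) ≤ c * ‖g i j‖₊) : normC f ≤ c * normC g := by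
  unfold normC
  rw [← ENNReal.tsum_mul_left]
  refine ENNReal.tsum_le_tsum fun k => ?_
  unfold rowSup
  refine iSup_le fun j => ?_
  exact (h j (j - k)).trans (mul_le_mul_right (le_iSup (fun j => (‖g j (j-k)‖₊ : ℝ≥0∞)) j) c)

lemma normC_add_le (f g : ℤ → ℤ → ℂ) :
    normC (fun i j => f i j + g i j) ≤ normC f + normC g := by
  unfold normC
  rw [← ENNReal.tsum_add]
  refine ENNReal.tsum_le_tsum fun k => ?_
  unfold rowSup
  refine iSup_le fun j => ?_
  calc (‖f j (j-k) + g j (j-k)‖₊ : ℝ≥0∞) ≤ (‖f j (j-k)‖₊ : ℝ≥0∞) + ‖g j (j-k)‖₊ := by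
        exact_mod_cast ENNReal.coe_le_coe.2 (nnnorm_add_le _ _)
    _ ≤ _ := add_le_add (le_iSup (fun j => (‖f j (j-k)‖₊ : ℝ≥0∞)) j)
        (le_iSup (fun j => (‖g j (j-k)‖₊ : ℝ≥0∞)) j)

theorem stmt10 (N : ℕ) (hN : 1 ≤ N) (a : ℤ → ℤ → ℂ) (hA : normC a < ⊤) (m : ℤ) :
    normC (fun i j =>
        (psi0 (((i - (N : ℤ) * m : ℤ) : ℝ) / (N : ℝ)) : ℂ) * trunc a N i j -
          trunc a N i j * (psi0 (((j - (N : ℤ) * m : ℤ) : ℝ) / (N : ℝ)) : ℂ)) ≤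
      ⨅ (s : ℕ) (_ : s ≤ N),
        (normC (fun i j => trunc a N i j - trunc a s i j) +
          ((2 * s : ℝ≥0∞) / (N : ℝ≥0∞)) * normC (trunc a s)) := by
  have hNpos : (0:ℝ) < N := by exact_mod_cast hN
  refine le_iInf fun s => le_iInf fun hs => ?_
  set ψ : ℤ → ℝ := fun i => psi0 (((i - (N : ℤ) * m : ℤ) : ℝ) / (N : ℝ)) with hψ
  have key : (fun i j =>
        (psi0 (((i - (N : ℤ) * m : ℤ) : ℝ) / (N : ℝ)) : ℂ) * trunc a N i j -
          trunc a N i j * (psi0 (((j - (N : ℤ) * m : ℤ) : ℝ) / (N : ℝ)) : ℂ)) =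
      fun i j => ((ψ i : ℂ) - (ψ j : ℂ)) * (trunc a N i j - trunc a s i j) +
        ((ψ i : ℂ) - (ψ j : ℂ)) * trunc a s i j := by
    funext i j; simp only [hψ]; ring
  rw [key]
  calc normC (fun i j => ((ψ i : ℂ) - (ψ j : ℂ)) * (trunc a N i j - trunc a s i j) +
        ((ψ i : ℂ) - (ψ j : ℂ)) * trunc a s i j)
      ≤ normC (fun i j => ((ψ i : ℂ) - (ψ j : ℂ)) * (trunc a N i j - trunc a s i j)) +
        normC (fun i j => ((ψ i : ℂ) - (ψ j : ℂ)) * trunc a s i j) := normC_add_le _ _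
    _ ≤ 1 * normC (fun i j => trunc a N i j - trunc a s i j) +
        ((2 * s : ℝ≥0∞) / (N : ℝ≥0∞)) * normC (trunc a s) := by
        refine add_le_add (normC_mul_le _ _ _ fun i j => ?_) (normC_mul_le _ _ _ fun i j => ?_)
        · rw [one_mul, ← Complex.ofReal_sub, nnnorm_mul, ENNReal.coe_mul]
          have h1 : (‖((ψ i - ψ j : ℝ) : ℂ)‖₊ : ℝ≥0∞) ≤ 1 := by
            rw [← enorm_eq_nnnorm, ← ofReal_norm, Complex.norm_real, Real.norm_eq_abs]
            refine le_trans (ENNReal.ofReal_le_ofReal ?_) (le_of_eq ENNReal.ofReal_one)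
            have hi := psi0_mem (((i - (N : ℤ) * m : ℤ) : ℝ) / (N : ℝ))
            have hj := psi0_mem (((j - (N : ℤ) * m : ℤ) : ℝ) / (N : ℝ))
            simp only [hψ]
            rw [abs_le]
            exact ⟨by linarith [hi.1, hi.2, hj.1, hj.2], by linarith [hi.1, hi.2, hj.1, hj.2]⟩
          exact (mul_le_mul' h1 le_rfl).trans_eq (one_mul _)
        · by_cases hij : |i - j| < (s : ℤ)
          · rw [← Complex.ofReal_sub, nnnorm_mul, ENNReal.coe_mul]
            refine mul_le_mul' ?_ le_rfl
            have harg : |((i - (N : ℤ) * m : ℤ) : ℝ) / (N : ℝ) -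
                ((j - (N : ℤ) * m : ℤ) : ℝ) / (N : ℝ)| ≤ (s : ℝ) / N := by
              have e : ((i - (N : ℤ) * m : ℤ) : ℝ) / (N : ℝ) -
                  ((j - (N : ℤ) * m : ℤ) : ℝ) / (N : ℝ) = ((i : ℝ) - j) / N := by
                push_cast; ring
              rw [e, abs_div, abs_of_pos hNpos]
              have hij' : |(i : ℝ) - j| ≤ (s : ℝ) := by
                have h := hij.le
                push_cast [← Int.cast_abs]
                exact_mod_cast h
              gcongr
            have hlip : |ψ i - ψ j| ≤ 2 * (s : ℝ) / N := by
              simp only [hψ]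
              refine (psi0_lip _ _).trans ?_
              rw [mul_div_assoc]
              linarith [harg]
            calc (‖((ψ i - ψ j : ℝ) : ℂ)‖₊ : ℝ≥0∞) = ENNReal.ofReal |ψ i - ψ j| := by
                  rw [← enorm_eq_nnnorm, ← ofReal_norm, Complex.norm_real, Real.norm_eq_abs]
              _ ≤ ENNReal.ofReal (2 * (s : ℝ) / N) := ENNReal.ofReal_le_ofReal hlip
              _ = (2 * s : ℝ≥0∞) / (N : ℝ≥0∞) := by
                  rw [ENNReal.ofReal_div_of_pos hNpos]
                  congr 1
                  · rw [show (2 * (s : ℝ)) = ((2 * s : ℕ) : ℝ) by push_cast; ring,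
                      ENNReal.ofReal_natCast]
                    push_cast; ring
                  · exact ENNReal.ofReal_natCast N
          · have h0 : trunc a s i j = 0 := by simp [trunc, hij]
            simp [h0]
    _ = _ := by rw [one_mul]
end

section
/- Let 1 ≤ p ≤ ∞ and A ∈ C. If A has ℓ^p-stability, i.e., there exist C₁, C₂ > 0 with C₁‖c‖_p ≤ ‖Ac‖_p ≤ C₂‖c‖_p for all c ∈ ℓ^p(ℤ), then there exist a constant C₀ > 0 and a positive integer N₀ such that for all integers N ≥ N₀ and all n ∈ Nℤ, ‖χ_n^{2N} A χ_n^N c‖_p ≥ C₀ ‖χ_n^N c‖_p for all c ∈ ℓ^p(ℤ). -/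
open MeasureTheory ENNReal Filter

lemma lpNorm_eq {p : ℝ≥0∞} (h0 : p ≠ 0) (ht : p ≠ ∞) (f : ℤ → ℂ) :
    lpNorm p f = (∑' j, (‖f j‖₊ : ℝ≥0∞) ^ p.toReal) ^ (1 / p.toReal) := by
  rw [_root_.lpNorm, eLpNorm_eq_lintegral_rpow_enorm_toReal h0 ht, lintegral_count, one_div]
  rfl

lemma lpNorm_top (f : ℤ → ℂ) : lpNorm ∞ f = ⨆ j, (‖f j‖₊ : ℝ≥0∞) := by
  rw [_root_.lpNorm, eLpNorm_exponent_top, eLpNormEssSup_count]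
  rfl

lemma mz {α : Type*} [MeasurableSpace α] (f : ℤ → α) : Measurable f := measurable_from_top

lemma aesm (f : ℤ → ℂ) : AEStronglyMeasurable f Measure.count :=
  (measurable_from_top (f := f)).stronglyMeasurable.aestronglyMeasurable

noncomputable def Np (r : ℝ) (h : ℤ → ℝ≥0∞) : ℝ≥0∞ := (∑' j, h j ^ r) ^ (1 / r)

lemma iSup_rpow_nat {r : ℝ} (hr : 0 < r) (f : ℕ → ℝ≥0∞) :
    (⨆ n, f n) ^ r = ⨆ n, f n ^ r := by
  have h := map_iSup (ENNReal.orderIsoRpow r hr) f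
  simp only [ENNReal.orderIsoRpow_apply] at h
  exact h

lemma Np_mono {r : ℝ} (hr : 0 ≤ r) {h g : ℤ → ℝ≥0∞} (hle : ∀ j, h j ≤ g j) :
    Np r h ≤ Np r g :=
  ENNReal.rpow_le_rpow (ENNReal.tsum_le_tsum fun j => ENNReal.rpow_le_rpow (hle j) hr)
    (by positivity)

lemma Np_add {r : ℝ} (hr : 1 ≤ r) (h g : ℤ → ℝ≥0∞) :
    Np r (h + g) ≤ Np r h + Np r g := by
  have := ENNReal.lintegral_Lp_add_le (μ := Measure.count) (p := r)
    (mz h).aemeasurable (mz g).aemeasurable hr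
  simpa [Np, lintegral_count] using this

lemma Np_finsum {r : ℝ} (hr : 1 ≤ r) (g : ℕ → ℤ → ℝ≥0∞) (n : ℕ) :
    Np r (fun j => ∑ i ∈ Finset.range n, g i j) ≤ ∑ i ∈ Finset.range n, Np r (g i) := by
  induction n with
  | zero =>
    simp only [Finset.range_zero, Finset.sum_empty]
    have h0 : (0:ℝ) < r := lt_of_lt_of_le one_pos hr
    have hz : Np r (fun _ : ℤ => (0:ℝ≥0∞)) = 0 := by
      rw [Np]
      simp_rw [ENNReal.zero_rpow_of_pos h0]
      rw [tsum_zero, ENNReal.zero_rpow_of_pos (one_div_pos.mpr h0)]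
    exact hz.le
  | succ n ih =>
    have heq : (fun j => ∑ i ∈ Finset.range (n+1), g i j)
        = (fun j => ∑ i ∈ Finset.range n, g i j) + g n := by
      funext j; simp [Finset.sum_range_succ]
    rw [heq, Finset.sum_range_succ]
    exact le_trans (Np_add hr _ _) (add_le_add_left ih _)

lemma Np_tsum {r : ℝ} (hr : 1 ≤ r) (g : ℕ → ℤ → ℝ≥0∞) :
    Np r (fun j => ∑' i, g i j) ≤ ∑' i, Np r (g i) := by
  have h0 : (0:ℝ) < r := lt_of_lt_of_le one_pos hr
  have h0' : (0:ℝ) < 1/r := one_div_pos.mpr h0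
  have hpt : ∀ j, (∑' i, g i j) = ⨆ n, ∑ i ∈ Finset.range n, g i j := fun j =>
    ENNReal.tsum_eq_iSup_nat
  have hmono : Monotone (fun n => fun j => (∑ i ∈ Finset.range n, g i j) ^ r) := by
    intro m n hmn j
    exact ENNReal.rpow_le_rpow (Finset.sum_le_sum_of_subset
      (Finset.range_subset_range.mpr hmn)) h0.le
  calc Np r (fun j => ∑' i, g i j)
      = (∑' j, (⨆ n, ∑ i ∈ Finset.range n, g i j) ^ r) ^ (1/r) := by
        simp only [Np, hpt]
    _ = (∑' j, ⨆ n, (∑ i ∈ Finset.range n, g i j) ^ r) ^ (1/r) := by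
        congr 1; exact tsum_congr fun j => iSup_rpow_nat h0 _
    _ = (⨆ n, ∑' j, (∑ i ∈ Finset.range n, g i j) ^ r) ^ (1/r) := by
        congr 1
        calc ∑' j, ⨆ n, (∑ i ∈ Finset.range n, g i j) ^ r
            = ∫⁻ j, ⨆ n, (∑ i ∈ Finset.range n, g i j) ^ r ∂Measure.count :=
              (lintegral_count _).symm
          _ = ⨆ n, ∫⁻ j, (∑ i ∈ Finset.range n, g i j) ^ r ∂Measure.count :=
              lintegral_iSup (fun n => mz _) hmono
          _ = ⨆ n, ∑' j, (∑ i ∈ Finset.range n, g i j) ^ r := by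
              simp only [lintegral_count]
    _ = ⨆ n, (∑' j, (∑ i ∈ Finset.range n, g i j) ^ r) ^ (1/r) :=
        iSup_rpow_nat h0' _
    _ ≤ ⨆ n, ∑ i ∈ Finset.range n, Np r (g i) :=
        iSup_mono fun n => Np_finsum hr g n
    _ ≤ ∑' i, Np r (g i) := iSup_le fun n => ENNReal.sum_le_tsum _

lemma Np_translate {r : ℝ} (h : ℤ → ℝ≥0∞) (k : ℤ) :
    Np r (fun j => h (j - k)) = Np r h := by
  unfold Np
  congr 1
  exact (Equiv.subRight k).tsum_eq (fun j => h j ^ r)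

lemma Np_smul {r : ℝ} (hr : 1 ≤ r) (b : ℝ≥0∞) (h : ℤ → ℝ≥0∞) :
    Np r (fun j => b * h j) = b * Np r h := by
  have h0 : (0:ℝ) < r := lt_of_lt_of_le one_pos hr
  unfold Np
  simp only [ENNReal.mul_rpow_of_nonneg _ _ h0.le, ENNReal.tsum_mul_left]
  rw [ENNReal.mul_rpow_of_nonneg _ _ (one_div_pos.mpr h0).le, ← ENNReal.rpow_mul,
    mul_one_div_cancel h0.ne', ENNReal.rpow_one]

lemma lpNorm_lt_top_of_finsupp {p : ℝ≥0∞} (h0 : p ≠ 0) (f : ℤ → ℂ) (s : Finset ℤ)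
    (hf : ∀ j ∉ s, f j = 0) : lpNorm p f < ⊤ := by
  by_cases ht : p = ∞
  · subst ht
    rw [lpNorm_top]
    refine lt_of_le_of_lt (iSup_le fun j => ?_)
      (ENNReal.sum_lt_top.mpr fun j _ => ENNReal.coe_lt_top :
        ∑ j ∈ s, (‖f j‖₊ : ℝ≥0∞) < ⊤)
    by_cases hj : j ∈ s
    · exact Finset.single_le_sum (f := fun j => (‖f j‖₊ : ℝ≥0∞)) (fun _ _ => zero_le) hj
    · simp [hf j hj]
  · rw [lpNorm_eq h0 ht]
    have hr : 0 < p.toReal := ENNReal.toReal_pos h0 ht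
    have : (∑' j, (‖f j‖₊ : ℝ≥0∞) ^ p.toReal) = ∑ j ∈ s, (‖f j‖₊ : ℝ≥0∞) ^ p.toReal := by
      refine tsum_eq_sum fun j hj => ?_
      simp [hf j hj, ENNReal.zero_rpow_of_pos hr]
    rw [this]
    exact ENNReal.rpow_lt_top_of_nonneg (by positivity)
      (ENNReal.sum_lt_top.mpr fun j _ =>
        ENNReal.rpow_lt_top_of_nonneg hr.le ENNReal.coe_ne_top).ne

lemma tail_small (a : ℤ → ℤ → ℂ) (hA : normC a < ⊤) {ε : ℝ≥0∞} (hε : ε ≠ 0) :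
    ∃ M : ℕ, 1 ≤ M ∧ (∑' k : ℤ, if (M:ℤ) ≤ |k| then rowSup a k else 0) ≤ ε := by
  set L := normC a with hL
  by_cases hLε : L ≤ ε
  · exact ⟨1, le_refl 1, le_trans (ENNReal.tsum_le_tsum fun k => by
      split_ifs <;> simp) hLε⟩
  · push_neg at hLε
    have hεt : ε ≠ ⊤ := fun h => absurd (h ▸ hLε) (by simp)
    have hL0 : L ≠ 0 := fun h => absurd (h ▸ hLε) (by simp)
    have hLt : L ≠ ⊤ := hA.ne
    have hsub : L - ε < L := ENNReal.sub_lt_self hLt hL0 hε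
    have hiSup : L = ⨆ s : Finset ℤ, ∑ k ∈ s, rowSup a k := by
      rw [hL, normC, ENNReal.tsum_eq_iSup_sum]
    obtain ⟨s, hs⟩ := lt_iSup_iff.mp (lt_of_lt_of_le hsub hiSup.le)
    refine ⟨(s.sup fun k => k.natAbs) + 1, le_add_self, ?_⟩
    set M := (s.sup fun k => k.natAbs) + 1 with hM
    have hnotin : ∀ k : ℤ, (M:ℤ) ≤ |k| → k ∉ s := by
      intro k hk hks
      have h1 : k.natAbs ≤ s.sup fun k => k.natAbs := Finset.le_sup hks
      rw [Int.abs_eq_natAbs] at hk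
      omega
    have hstep : (∑' k : ℤ, if (M:ℤ) ≤ |k| then rowSup a k else 0)
        ≤ ∑' k : ℤ, if k ∈ s then 0 else rowSup a k := by
      refine ENNReal.tsum_le_tsum fun k => ?_
      by_cases hk : (M:ℤ) ≤ |k|
      · simp [hk, hnotin k hk]
      · simp [hk]
    refine le_trans hstep ?_
    have hsplit : L = ∑ k ∈ s, rowSup a k + ∑' k, if k ∈ s then 0 else rowSup a k := by
      rw [hL, normC]
      have : ∀ k : ℤ, rowSup a k
          = (if k ∈ s then rowSup a k else 0) + (if k ∈ s then 0 else rowSup a k) := by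
        intro k; split_ifs <;> simp
      calc ∑' k, rowSup a k
          = ∑' k, ((if k ∈ s then rowSup a k else 0) + (if k ∈ s then 0 else rowSup a k)) :=
            tsum_congr this
        _ = (∑' k, if k ∈ s then rowSup a k else 0) + ∑' k, if k ∈ s then 0 else rowSup a k :=
            ENNReal.tsum_add
        _ = _ := by
            congr 1
            rw [tsum_eq_sum (s := s) (fun k hk => by simp [hk])]
            exact Finset.sum_congr rfl fun k hk => by simp [hk]
    have hfin : ∑ k ∈ s, rowSup a k ≠ ⊤ := by
      refine (lt_of_le_of_lt ?_ hA).ne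
      rw [hL, normC]
      exact ENNReal.sum_le_tsum s
    have hLle : L ≤ ∑ k ∈ s, rowSup a k + ε := by
      have := (ENNReal.sub_lt_iff_lt_right hεt hLε.le).mp hs
      exact this.le.trans (by rw [add_comm])
    rw [hsplit] at hLle
    exact ENNReal.le_of_add_le_add_left hfin hLle

lemma off_bound (p : ℝ≥0∞) (hp : 1 ≤ p) (a : ℤ → ℤ → ℂ) (M N : ℕ) (hMN : M ≤ N)
    (y : ℤ) (c : ℤ → ℂ) :
    lpNorm p (fun j => if |j - y| < ((2*N:ℕ):ℤ) then 0 else matMul a (chiProj y N c) j)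
      ≤ (∑' k : ℤ, if (M:ℤ) ≤ |k| then rowSup a k else 0) * lpNorm p (chiProj y N c) := by
  have hp0 : p ≠ 0 := fun h => by simp [h] at hp
  set b : ℤ → ℝ≥0∞ := fun k => if (M:ℤ) ≤ |k| then rowSup a k else 0 with hb
  set u : ℤ → ℂ := chiProj y N c with hu
  set o : ℤ → ℂ := fun j => if |j - y| < ((2*N:ℕ):ℤ) then 0 else matMul a u j with ho
  set G : ℤ → ℤ → ℝ≥0∞ := fun k j => b k * (‖u (j - k)‖₊ : ℝ≥0∞) with hG
  have hsupp : ∀ j' ∉ Finset.Ioo (y - N) (y + N), u j' = 0 := by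
    intro j' hj'
    rw [hu, chiProj, if_neg]
    intro habs
    exact hj' (Finset.mem_Ioo.mpr (by have := abs_lt.mp habs; omega))
  have hpt : ∀ j, (‖o j‖₊ : ℝ≥0∞) ≤ ∑' k, G k j := by
    intro j
    by_cases hj : |j - y| < ((2*N:ℕ):ℤ)
    · have h0 : o j = 0 := by rw [ho]; exact if_pos hj
      simp [h0]
    · have hoj : o j = ∑ j' ∈ Finset.Ioo (y - N) (y + N), a j j' * u j' := by
        rw [ho]
        simp only [hj, if_false]
        exact tsum_eq_sum fun j' hj' => by rw [hsupp j' hj', mul_zero]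
      rw [hoj]
      calc (‖∑ j' ∈ Finset.Ioo (y - N) (y + N), a j j' * u j'‖₊ : ℝ≥0∞)
          ≤ ∑ j' ∈ Finset.Ioo (y - N) (y + N), (‖a j j' * u j'‖₊ : ℝ≥0∞) := by
            rw [← ENNReal.coe_finset_sum]
            exact ENNReal.coe_le_coe.mpr (nnnorm_sum_le _ _)
        _ ≤ ∑ j' ∈ Finset.Ioo (y - N) (y + N), G (j - j') j := by
            refine Finset.sum_le_sum fun j' hj' => ?_
            have hmem := Finset.mem_Ioo.mp hj'
            have habs : (M:ℤ) ≤ |j - j'| := by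
              rw [Int.abs_eq_natAbs] at hj ⊢
              omega
            have hrow : (‖a j j'‖₊ : ℝ≥0∞) ≤ rowSup a (j - j') := by
              have h1 := le_iSup (fun i : ℤ => (‖a i (i - (j - j'))‖₊ : ℝ≥0∞)) j
              rw [rowSup]
              simpa [_root_.sub_sub_cancel] using h1
            have hGval : G (j - j') j = b (j - j') * (‖u j'‖₊ : ℝ≥0∞) := by
              rw [hG]; simp [_root_.sub_sub_cancel]
            rw [hGval, hb]
            simp only [habs, if_true]
            rw [nnnorm_mul, ENNReal.coe_mul]
            exact mul_le_mul_left hrow _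
        _ = ∑ k ∈ (Finset.Ioo (y - N) (y + N)).image (fun j' => j - j'), G k j := by
            rw [Finset.sum_image (fun x _ z _ h => by omega)]
        _ ≤ ∑' k, G k j := ENNReal.sum_le_tsum _
  by_cases ht : p = ∞
  · subst ht
    rw [lpNorm_top, lpNorm_top]
    calc (⨆ j, (‖o j‖₊ : ℝ≥0∞)) ≤ ⨆ j, ∑' k, G k j := iSup_mono hpt
      _ ≤ ∑' k, ⨆ j, G k j :=
          iSup_le fun j => ENNReal.tsum_le_tsum fun k => le_iSup (fun j => G k j) j
      _ = ∑' k, b k * ⨆ j, (‖u j‖₊ : ℝ≥0∞) := by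
          refine tsum_congr fun k => ?_
          have h2 : (⨆ j, (‖u (j - k)‖₊ : ℝ≥0∞)) = ⨆ j, (‖u j‖₊ : ℝ≥0∞) :=
            (Equiv.subRight k).iSup_comp (g := fun j => (‖u j‖₊ : ℝ≥0∞))
          calc (⨆ j, G k j) = ⨆ j, b k * (‖u (j - k)‖₊ : ℝ≥0∞) := rfl
            _ = b k * ⨆ j, (‖u (j - k)‖₊ : ℝ≥0∞) := by rw [ENNReal.mul_iSup]
            _ = b k * ⨆ j, (‖u j‖₊ : ℝ≥0∞) := by rw [h2]
      _ = (∑' k, b k) * ⨆ j, (‖u j‖₊ : ℝ≥0∞) := ENNReal.tsum_mul_right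
  · have hr1 : 1 ≤ p.toReal := by
      have := ENNReal.toReal_mono ht hp
      simpa using this
    have hr0 : (0:ℝ) < p.toReal := lt_of_lt_of_le one_pos hr1
    set e : ℕ ≃ ℤ := (Denumerable.eqv ℤ).symm with he
    rw [lpNorm_eq hp0 ht, lpNorm_eq hp0 ht]
    calc (∑' j, (‖o j‖₊ : ℝ≥0∞) ^ p.toReal) ^ (1 / p.toReal)
        ≤ Np p.toReal (fun j => ∑' k, G k j) := Np_mono hr0.le hpt
      _ = Np p.toReal (fun j => ∑' n : ℕ, G (e n) j) := by
          unfold Np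
          congr 1
          refine tsum_congr fun j => ?_
          congr 1
          exact (e.tsum_eq (fun k => G k j)).symm
      _ ≤ ∑' n : ℕ, Np p.toReal (G (e n)) := Np_tsum hr1 _
      _ = ∑' k : ℤ, Np p.toReal (G k) := e.tsum_eq (fun k => Np p.toReal (G k))
      _ = ∑' k : ℤ, b k * Np p.toReal (fun j => (‖u j‖₊ : ℝ≥0∞)) := by
          refine tsum_congr fun k => ?_
          rw [hG]
          simp only
          rw [Np_smul hr1, Np_translate (fun j => (‖u j‖₊ : ℝ≥0∞)) k]
      _ = (∑' k, b k) * (∑' j, (‖u j‖₊ : ℝ≥0∞) ^ p.toReal) ^ (1 / p.toReal) :=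
          ENNReal.tsum_mul_right

theorem stmt11 (p : ℝ≥0∞) (hp : 1 ≤ p) (a : ℤ → ℤ → ℂ) (hA : normC a < ⊤)
    (hstab : ∃ C₁ C₂ : ℝ≥0∞, C₁ ≠ 0 ∧ C₂ ≠ ⊤ ∧ ∀ c : ℤ → ℂ, lpNorm p c < ⊤ →
      C₁ * lpNorm p c ≤ lpNorm p (matMul a c) ∧
        lpNorm p (matMul a c) ≤ C₂ * lpNorm p c) :
    ∃ C₀ : ℝ≥0∞, C₀ ≠ 0 ∧ ∃ N₀ : ℕ, 0 < N₀ ∧ ∀ N : ℕ, N₀ ≤ N → ∀ m : ℤ, ∀ c : ℤ → ℂ,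
      C₀ * lpNorm p (chiProj ((N : ℤ) * m) N c) ≤
        lpNorm p (chiProj ((N : ℤ) * m) (2 * N) (matMul a (chiProj ((N : ℤ) * m) N c))) := by
  obtain ⟨C₁, C₂, hC₁, hC₂, hst⟩ := hstab
  have hp0 : p ≠ 0 := fun h => by simp [h] at hp
  set D := min C₁ 1 with hD
  have hD0 : D ≠ 0 := by
    have h1 : 0 < D := lt_min (pos_iff_ne_zero.mpr hC₁) one_pos
    exact h1.ne'
  have hDt : D ≠ ⊤ := (lt_of_le_of_lt (min_le_right _ _) (by norm_num : (1:ℝ≥0∞) < ⊤)).ne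
  have hε : D / 2 ≠ 0 := by
    simp [ENNReal.div_eq_zero_iff, hD0]
  obtain ⟨M, hM1, hMtail⟩ := tail_small a hA hε
  refine ⟨D / 2, hε, M, hM1, ?_⟩
  intro N hN m c
  set y : ℤ := (N : ℤ) * m with hy
  set u := chiProj y N c with hu
  have hsupp : ∀ j ∉ Finset.Ioo (y - N) (y + N), u j = 0 := by
    intro j hj
    rw [hu, chiProj, if_neg]
    intro habs
    exact hj (Finset.mem_Ioo.mpr (by have := abs_lt.mp habs; omega))
  have hufin : lpNorm p u < ⊤ :=
    lpNorm_lt_top_of_finsupp hp0 u (Finset.Ioo (y - N) (y + N)) hsupp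
  have hlow := (hst u hufin).1
  set w := chiProj y (2*N) (matMul a u) with hw
  set o : ℤ → ℂ := fun j => if |j - y| < ((2*N:ℕ):ℤ) then 0 else matMul a u j with ho
  have hsum : matMul a u = w + o := by
    funext j
    simp only [hw, ho, chiProj, Pi.add_apply]
    split_ifs <;> simp
  have htri : lpNorm p (matMul a u) ≤ lpNorm p w + lpNorm p o := by
    rw [hsum]
    exact eLpNorm_add_le (aesm w) (aesm o) hp
  have hoff : lpNorm p o ≤ D / 2 * lpNorm p u :=
    le_trans (off_bound p hp a M N hN y c) (mul_le_mul_left hMtail _)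
  have hchain : D * lpNorm p u ≤ lpNorm p w + D / 2 * lpNorm p u :=
    calc D * lpNorm p u ≤ C₁ * lpNorm p u := mul_le_mul_left (min_le_left _ _) _
      _ ≤ lpNorm p (matMul a u) := hlow
      _ ≤ lpNorm p w + lpNorm p o := htri
      _ ≤ lpNorm p w + D / 2 * lpNorm p u := add_le_add_right hoff _
  have hchain2 : D / 2 * lpNorm p u + D / 2 * lpNorm p u
      ≤ lpNorm p w + D / 2 * lpNorm p u := by
    calc D / 2 * lpNorm p u + D / 2 * lpNorm p u = D * lpNorm p u := by
          rw [← add_mul, ENNReal.add_halves]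
      _ ≤ _ := hchain
  have hfin2 : D / 2 * lpNorm p u ≠ ⊤ :=
    ENNReal.mul_ne_top (fun h => hDt (by simpa using (ENNReal.div_eq_top.mp h))) hufin.ne
  exact ENNReal.le_of_add_le_add_right hfin2 hchain2
end

section
/- Let 1 ≤ p ≤ ∞ and A ∈ C. Suppose there exist C₀ > 0 and a positive integer N₀ such that ‖χ_n^{2N} A χ_n^N c‖_p ≥ C₀‖χ_n^N c‖_p for all c ∈ ℓ^p(ℤ), all integers N ≥ N₀, and all n ∈ Nℤ. Then there exist a positive integer N₁ and a constant α > 2(5+2^{1−p})^{1/p} · inf_{0 ≤ s ≤ N₁}( ‖A−A_s‖_C + (s/N₁)‖A‖_C ) such that ‖χ_n^{2N₁} A χ_n^{N₁} c‖_p ≥ α‖χ_n^{N₁} c‖_p for all c ∈ ℓ^p(ℤ) and all n ∈ N₁ℤ. -/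
open MeasureTheory ENNReal Filter

lemma rowSup_diff (a : ℤ → ℤ → ℂ) (s : ℕ) (k : ℤ) :
    rowSup (fun i j => a i j - trunc a s i j) k
      = if |k| < (s : ℤ) then 0 else rowSup a k := by
  unfold rowSup trunc
  split_ifs with h
  · simp [sub_sub_cancel, h]
  · simp [sub_sub_cancel, h]

theorem stmt12 (p : ℝ≥0∞) (hp : 1 ≤ p) (a : ℤ → ℤ → ℂ) (hA : normC a < ⊤)
    (hyp : ∃ C₀ : ℝ≥0∞, C₀ ≠ 0 ∧ ∃ N₀ : ℕ, 0 < N₀ ∧ ∀ N : ℕ, N₀ ≤ N → ∀ m : ℤ, ∀ c : ℤ → ℂ,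
      C₀ * lpNorm p (chiProj ((N : ℤ) * m) N c) ≤
        lpNorm p (chiProj ((N : ℤ) * m) (2 * N) (matMul a (chiProj ((N : ℤ) * m) N c)))) :
    ∃ N₁ : ℕ, 0 < N₁ ∧ ∃ α : ℝ≥0∞,
      2 * ((5 : ℝ≥0∞) + (2 : ℝ≥0∞) ^ (1 - p.toReal)) ^ (1 / p.toReal) *
          (⨅ (s : ℕ) (_ : s ≤ N₁),
            (normC (fun i j => a i j - trunc a s i j) + ((s : ℝ≥0∞) / (N₁ : ℝ≥0∞)) * normC a)) < α ∧
      ∀ m : ℤ, ∀ c : ℤ → ℂ,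
        α * lpNorm p (chiProj ((N₁ : ℤ) * m) N₁ c) ≤
          lpNorm p (chiProj ((N₁ : ℤ) * m) (2 * N₁) (matMul a (chiProj ((N₁ : ℤ) * m) N₁ c))) := by
  obtain ⟨C₀, hC₀, N₀, hN₀, hmain⟩ := hyp
  set K : ℝ≥0∞ := ((5 : ℝ≥0∞) + (2 : ℝ≥0∞) ^ (1 - p.toReal)) ^ (1 / p.toReal) with hK
  have hbase_ne_top : ((5 : ℝ≥0∞) + (2 : ℝ≥0∞) ^ (1 - p.toReal)) ≠ ⊤ := by
    refine ENNReal.add_ne_top.2 ⟨by norm_num, ?_⟩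
    simp [ENNReal.rpow_eq_top_iff]
  have hbase_ne : ((5 : ℝ≥0∞) + (2 : ℝ≥0∞) ^ (1 - p.toReal)) ≠ 0 := by
    simp
  have hKtop : K ≠ ⊤ :=
    ENNReal.rpow_ne_top_of_nonneg (one_div_nonneg.2 ENNReal.toReal_nonneg) hbase_ne_top
  have hKne0 : K ≠ 0 := by
    simpa [hK] using (ENNReal.rpow_pos (lt_of_le_of_ne (zero_le _) (Ne.symm hbase_ne))
      hbase_ne_top (y := 1 / p.toReal)).ne'
  have h2K0 : (2 * K) ≠ 0 := by
    exact mul_ne_zero (by norm_num) hKne0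
  have h2Ktop : (2 * K) ≠ ⊤ := ENNReal.mul_ne_top (by norm_num) hKtop
  set ε : ℝ≥0∞ := C₀ / (2 * K) with hεdef
  have hε : 0 < ε := ENNReal.div_pos hC₀ h2Ktop
  have hε2 : 0 < ε / 2 := ENNReal.div_pos hε.ne' (by norm_num)
  -- find a finset with small complement sum
  obtain ⟨T, hT⟩ : ∃ T : Finset ℤ, ∑' k : { x // x ∉ T }, rowSup a k < ε / 2 :=
    ((ENNReal.tendsto_tsum_compl_atTop_zero (f := rowSup a) hA.ne).eventually_lt_const
      hε2).exists
  set s₀ : ℕ := (T.sup fun k => k.natAbs) + 1 with hs₀def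
  have hs₀ : ∀ k ∈ T, |k| < (s₀ : ℤ) := by
    intro k hk
    have : k.natAbs ≤ T.sup fun k => k.natAbs := Finset.le_sup hk
    rw [Int.abs_eq_natAbs]
    exact_mod_cast Nat.lt_succ_of_le this
  have hdiff : normC (fun i j => a i j - trunc a s₀ i j) < ε / 2 := by
    refine lt_of_le_of_lt ?_ hT
    unfold normC
    calc ∑' k : ℤ, rowSup (fun i j => a i j - trunc a s₀ i j) k
        = ∑' k : ℤ, (if |k| < (s₀ : ℤ) then 0 else rowSup a k) := by
          simp only [rowSup_diff]
      _ ≤ ∑' k : ℤ, Set.indicator {x : ℤ | x ∉ T} (rowSup a) k := by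
          refine ENNReal.tsum_le_tsum fun k => ?_
          by_cases hk : k ∈ T
          · simp [Set.indicator, hk, hs₀ k hk]
          · simp [Set.indicator, hk]
            split_ifs <;> simp
      _ = ∑' k : { x // x ∉ T }, rowSup a k := (tsum_subtype _ _).symm
  -- choose M so that (s₀ / N) * normC a < ε / 2 for N ≥ M
  have htend : Tendsto (fun N : ℕ => ((s₀ : ℝ≥0∞) * normC a) * ((N : ℝ≥0∞))⁻¹)
      atTop (nhds 0) := by
    have := ENNReal.Tendsto.const_mul (a := (s₀ : ℝ≥0∞) * normC a)
      ENNReal.tendsto_inv_nat_nhds_zero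
      (Or.inr (ENNReal.mul_ne_top (by simp) hA.ne))
    simpa using this
  obtain ⟨M, hM⟩ := (htend.eventually_lt_const hε2).exists_forall_of_atTop
  refine ⟨max N₀ (max s₀ M), lt_of_lt_of_le hN₀ (le_max_left _ _), C₀, ?_, ?_⟩
  · -- the strict inequality
    set N₁ : ℕ := max N₀ (max s₀ M)
    have hs₀N₁ : s₀ ≤ N₁ := le_trans (le_max_left _ _) (le_max_right _ _)
    have hMN₁ : M ≤ N₁ := le_trans (le_max_right _ _) (le_max_right _ _)
    have hterm2 : ((s₀ : ℝ≥0∞) / (N₁ : ℝ≥0∞)) * normC a < ε / 2 := by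
      have := hM N₁ hMN₁
      calc ((s₀ : ℝ≥0∞) / (N₁ : ℝ≥0∞)) * normC a
          = ((s₀ : ℝ≥0∞) * normC a) * ((N₁ : ℝ≥0∞))⁻¹ := by
            rw [div_eq_mul_inv]; ring
        _ < ε / 2 := this
    have hinf : (⨅ (s : ℕ) (_ : s ≤ N₁),
        (normC (fun i j => a i j - trunc a s i j) + ((s : ℝ≥0∞) / (N₁ : ℝ≥0∞)) * normC a)) < ε := by
      refine lt_of_le_of_lt (iInf_le_of_le s₀ (iInf_le _ hs₀N₁)) ?_
      calc normC (fun i j => a i j - trunc a s₀ i j) + ((s₀ : ℝ≥0∞) / (N₁ : ℝ≥0∞)) * normC a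
          < ε / 2 + ε / 2 := ENNReal.add_lt_add hdiff hterm2
        _ = ε := ENNReal.add_halves ε
    calc 2 * K * (⨅ (s : ℕ) (_ : s ≤ N₁),
          (normC (fun i j => a i j - trunc a s i j) + ((s : ℝ≥0∞) / (N₁ : ℝ≥0∞)) * normC a))
        < 2 * K * ε := (ENNReal.mul_lt_mul_iff_right h2K0 h2Ktop).2 hinf
      _ = C₀ := by rw [hεdef, mul_comm, ENNReal.div_mul_cancel h2K0 h2Ktop]
  · exact hmain _ (le_max_left _ _)
end

section
/- Let a(0)=1, a(−1)=−1, a(j)=0 otherwise, and for an integer N ≥ 1 let Ã_N be the (2N+2)×(2N+1) lower bidiagonal matrix (a(j−j'))_{−N−1 ≤ j ≤ N+1, −N ≤ j' ≤ N} (i.e., with −1 on the main diagonal shifted appropriately and 1 on the subdiagonal). Then for all 1 ≤ p ≤ ∞ and all c ∈ ℝ^{2N+1}, ‖Ã_N c‖_p ≥ (N+1)^{−1} ‖c‖_p. -/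
open MeasureTheory ENNReal Filter

/-- Composition with an injection does not increase the ℓᵖ norm w.r.t. counting measure. -/
lemma eLpNorm_comp_injective_le {σ : ℤ → ℤ} (hinj : Function.Injective σ) (d : ℤ → ℂ)
    (p : ℝ≥0∞) : eLpNorm (d ∘ σ) p Measure.count ≤ eLpNorm d p Measure.count := by
  have hemb : MeasurableEmbedding σ :=
    ⟨hinj, .of_discrete, fun s _ => .of_discrete⟩
  rw [← hemb.eLpNorm_map_measure]
  refine eLpNorm_mono_measure d (Measure.le_intro fun s hs _ => ?_)
  rw [Measure.map_apply hemb.measurable hs]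
  calc Measure.count (σ ⁻¹' s) = Measure.count (σ '' (σ ⁻¹' s)) :=
        (Measure.count_injective_image hinj _).symm
    _ ≤ Measure.count s := measure_mono (Set.image_preimage_subset _ _)

theorem stmt16 (p : ℝ≥0∞) (hp : 1 ≤ p) (N : ℕ) (hN : 1 ≤ N)
    (a : ℤ → ℂ) (ha : a = fun j : ℤ => if j = 0 then (1 : ℂ) else if j = -1 then -1 else 0)
    (c : ℤ → ℂ) (hc : ∀ j : ℤ, (N : ℤ) < |j| → c j = 0) :
    ((N : ℝ≥0∞) + 1)⁻¹ * lpNorm p c ≤ lpNorm p (matMul (fun j j' : ℤ => a (j - j')) c) := by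
  set d : ℤ → ℂ := matMul (fun j j' : ℤ => a (j - j')) c with hdef
  have hc' : ∀ k : ℤ, ((N : ℤ) < k ∨ (N : ℤ) < -k) → c k = 0 := fun k hk => hc k (lt_abs.mpr hk)
  -- Step 1: d j = c j - c (j+1)
  have hd : ∀ j : ℤ, d j = c j - c (j + 1) := by
    intro j
    have hfun : (fun j' => a (j - j') * c j')
        = fun j' => if j' = j then c j else if j' = j + 1 then -c (j + 1) else 0 := by
      funext j'
      rcases eq_or_ne j' j with rfl | h1
      · simp [ha]
      · rcases eq_or_ne j' (j + 1) with rfl | h2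
        · have h3 : j - (j + 1) = -1 := by ring
          simp [ha, h3, h1.symm]
        · have hA : j - j' ≠ 0 := by omega
          have hB : j - j' ≠ -1 := by omega
          simp [ha, hA, hB, h1, h2]
    show (∑' j' : ℤ, a (j - j') * c j') = _
    rw [hfun, tsum_eq_sum (s := {j, j + 1}) (by
      intro b hb
      simp only [Finset.mem_insert, Finset.mem_singleton, not_or] at hb
      simp [hb.1, hb.2])]
    have hne : j ≠ j + 1 := by omega
    rw [Finset.sum_insert (by simpa using hne), Finset.sum_singleton]
    simp [hne.symm, sub_eq_add_neg]
  -- Step 2: telescoping recovery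
  have hpos : ∀ j : ℤ, 0 ≤ j →
      c j = ∑ i ∈ Finset.range (N + 1), (if j + i ≤ (N : ℤ) then d (j + i) else 0) := by
    intro j hj
    by_cases hjN : j ≤ (N : ℤ)
    · set n : ℕ := ((N : ℤ) + 1 - j).toNat with hn
      have hnN : n ≤ N + 1 := by omega
      have hcond : ∀ i : ℕ, (j + i ≤ (N : ℤ)) ↔ i < n := by intro i; omega
      have h1 : ∑ i ∈ Finset.range (N + 1), (if j + i ≤ (N : ℤ) then d (j + i) else 0)
          = ∑ i ∈ Finset.range n, d (j + i) := by
        rw [← Finset.sum_subset (Finset.range_subset_range.2 hnN)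
          (fun x _ hx => by rw [if_neg]; rw [hcond]; simpa using hx)]
        exact Finset.sum_congr rfl fun x hx => by
          rw [if_pos]; rw [hcond]; simpa using hx
      have h2 : ∑ i ∈ Finset.range n, d (j + i) = c j - c (j + n) := by
        have := Finset.sum_range_sub' (f := fun i : ℕ => c (j + i)) n
        simp only [Nat.cast_zero, add_zero] at this
        rw [← this]
        exact Finset.sum_congr rfl fun x _ => by rw [hd]; push_cast; ring_nf
      have h3 : c (j + n) = 0 := hc' _ (by omega)
      rw [h1, h2, h3, sub_zero]
    · have h0 : c j = 0 := hc' _ (by omega)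
      rw [h0, Finset.sum_eq_zero]
      intro i _
      rw [if_neg (by omega)]
  have hneg : ∀ j : ℤ, j < 0 →
      c j = ∑ i ∈ Finset.range (N + 1), (if -(N : ℤ) ≤ j - i then -d (j - 1 - i) else 0) := by
    intro j hj
    by_cases hjN : -(N : ℤ) ≤ j
    · set n : ℕ := (j + N + 1).toNat with hn
      have hnN : n ≤ N + 1 := by omega
      have hcond : ∀ i : ℕ, (-(N : ℤ) ≤ j - i) ↔ i < n := by intro i; omega
      have h1 : ∑ i ∈ Finset.range (N + 1), (if -(N : ℤ) ≤ j - i then -d (j - 1 - i) else 0)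
          = ∑ i ∈ Finset.range n, -d (j - 1 - i) := by
        rw [← Finset.sum_subset (Finset.range_subset_range.2 hnN)
          (fun x _ hx => by rw [if_neg]; rw [hcond]; simpa using hx)]
        exact Finset.sum_congr rfl fun x hx => by
          rw [if_pos]; rw [hcond]; simpa using hx
      have h2 : ∑ i ∈ Finset.range n, -d (j - 1 - i) = c j - c (j - n) := by
        have := Finset.sum_range_sub' (f := fun i : ℕ => c (j - i)) n
        simp only [Nat.cast_zero, sub_zero] at this
        rw [← this]
        exact Finset.sum_congr rfl fun x _ => by rw [hd]; push_cast; ring_nf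
      have h3 : c (j - n) = 0 := hc' _ (by omega)
      rw [h1, h2, h3, sub_zero]
    · have h0 : c j = 0 := hc' _ (by omega)
      rw [h0, Finset.sum_eq_zero]
      intro i _
      rw [if_neg (by omega)]
  -- Step 3: decomposition of c
  set h : ℕ → ℤ → ℂ := fun m j =>
    if 0 ≤ j then (if j + m ≤ (N : ℤ) then d (j + m) else 0)
    else (if -(N : ℤ) ≤ j - m then -d (j - 1 - m) else 0) with hhdef
  have hdecomp : c = ∑ m ∈ Finset.range (N + 1), h m := by
    funext j
    rw [Finset.sum_apply]
    by_cases hj : 0 ≤ j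
    · rw [hpos j hj]
      exact Finset.sum_congr rfl fun m _ => by simp [hhdef, hj]
    · rw [hneg j (by omega)]
      exact Finset.sum_congr rfl fun m _ => by simp [hhdef, hj]
  -- Step 4: injections σ m and pointwise domination
  have key : ∀ m : ℕ, eLpNorm (h m) p Measure.count ≤ eLpNorm d p Measure.count := by
    intro m
    set σ : ℤ → ℤ := fun j => if 0 ≤ j then j + m else j - 1 - m with hσ
    have hinj : Function.Injective σ := by
      intro j1 j2 hEq
      simp only [hσ] at hEq
      split_ifs at hEq <;> omega
    calc eLpNorm (h m) p Measure.count ≤ eLpNorm (d ∘ σ) p Measure.count := by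
          refine eLpNorm_mono_nnnorm fun j => ?_
          simp only [hhdef, hσ, Function.comp_apply]
          split_ifs <;> simp
      _ ≤ eLpNorm d p Measure.count := eLpNorm_comp_injective_le hinj d p
  -- Step 5: triangle inequality and conclusion
  have hmeas : ∀ m ∈ Finset.range (N + 1), AEStronglyMeasurable (h m) Measure.count :=
    fun m _ => ((Measurable.of_discrete (f := h m)).stronglyMeasurable).aestronglyMeasurable
  have hmain : lpNorm p c ≤ ((N : ℝ≥0∞) + 1) * eLpNorm d p Measure.count := by
    calc lpNorm p c = eLpNorm (∑ m ∈ Finset.range (N + 1), h m) p Measure.count := by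
          rw [_root_.lpNorm, hdecomp]
      _ ≤ ∑ m ∈ Finset.range (N + 1), eLpNorm (h m) p Measure.count :=
          eLpNorm_sum_le hmeas hp
      _ ≤ ∑ _m ∈ Finset.range (N + 1), eLpNorm d p Measure.count :=
          Finset.sum_le_sum fun m _ => key m
      _ = ((N : ℝ≥0∞) + 1) * eLpNorm d p Measure.count := by
          rw [Finset.sum_const, Finset.card_range, nsmul_eq_mul]
          push_cast
          ring
  have hK0 : ((N : ℝ≥0∞) + 1) ≠ 0 := by simp
  have hKt : ((N : ℝ≥0∞) + 1) ≠ ∞ := by simp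
  calc ((N : ℝ≥0∞) + 1)⁻¹ * lpNorm p c
      ≤ ((N : ℝ≥0∞) + 1)⁻¹ * (((N : ℝ≥0∞) + 1) * eLpNorm d p Measure.count) :=
        mul_le_mul_right hmain _
    _ = eLpNorm d p Measure.count := by
        rw [← mul_assoc, ENNReal.inv_mul_cancel hK0 hKt, one_mul]
    _ = lpNorm p (matMul (fun j j' : ℤ => a (j - j')) c) := rfl
end
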